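/- Let p = 2 and n an even positive integer with 2-adic valuation ℓ = v_2(n). The number of odd solutions x with 1 ≤ x ≤ 2^e to x^(x^n) ≡ x (mod 2^e) is 2^{e-1} if 1 ≤ e ≤ 4+ℓ, and 2^{⌊(e+ℓ)/2⌋+1} if e ≥ 5+ℓ. -/

import Mathlib

lemma count_res (e c r : ℕ) (hc : c ≤ e) (hr1 : 1 ≤ r) (hr : r < 2^c) :
    ((Finset.Icc 1 (2^e)).filter (fun x => x % 2^c = r)).card = 2^(e-c) := by
  have hpos : 0 < 2^c := Nat.pow_pos (by norm_num)
  have hsplit : 2^c * 2^(e-c) = 2^e := by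
    rw [← pow_add]; congr 1; omega
  have : ((Finset.Icc 1 (2^e)).filter (fun x => x % 2^c = r))
      = (Finset.range (2^(e-c))).image (fun k => 2^c * k + r) := by
    ext x
    simp only [Finset.mem_filter, Finset.mem_Icc, Finset.mem_image, Finset.mem_range]
    constructor
    · rintro ⟨⟨h1, h2⟩, h3⟩
      refine ⟨x / 2^c, ?_, ?_⟩
      · have hx : x < 2^e := by
          rcases eq_or_lt_of_le h2 with h | h
          · exfalso
            have : x % 2^c = 0 := by
              rw [h, ← hsplit, Nat.mul_mod_right]
            omega
          · exact h
        rw [← hsplit] at hx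
        exact Nat.div_lt_iff_lt_mul hpos |>.mpr (by rw [Nat.mul_comm]; exact hx)
      · have := Nat.div_add_mod x (2^c)
        omega
    · rintro ⟨k, hk, rfl⟩
      refine ⟨⟨by omega, ?_⟩, ?_⟩
      · have : 2^c * k + r ≤ 2^c * (2^(e-c) - 1) + r := by
          have : k ≤ 2^(e-c) - 1 := by omega
          nlinarith
        have h2 : 2^c * (2^(e-c)-1) + r < 2^c * 2^(e-c) := by
          rw [Nat.mul_sub_one]
          have : 2^c ≤ 2^c * 2^(e-c) := Nat.le_mul_of_pos_right _ (by positivity)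
          omega
        omega
      · rw [Nat.mul_add_mod]
        exact Nat.mod_eq_of_lt hr
  rw [this, Finset.card_image_of_injective _ (fun a b hab => by simp at hab; omega),
    Finset.card_range]

-- LTE specialization: for odd x ≥ 3, even m ≠ 0
lemma lte2 {x m : ℕ} (hx3 : 3 ≤ x) (hx : Odd x) (hm : Even m) (hm0 : m ≠ 0) :
    padicValNat 2 (x ^ m - 1) + 1 =
      padicValNat 2 (x + 1) + padicValNat 2 (x - 1) + padicValNat 2 m := by
  have := padicValNat.pow_two_sub_pow (x := x) (y := 1) (by omega)
    (by rcases hx with ⟨k, hk⟩; omega) (by rw [Nat.two_dvd_ne_zero, ← Nat.odd_iff]; exact hx) hm0 hm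
  simpa using this

lemma main_equiv {x n e ℓ : ℕ} (hx : Odd x) (hx3 : 3 ≤ x) (hn : Even n) (hn1 : 0 < n)
    (hℓ : ℓ = padicValNat 2 n) :
    ((x : ZMod (2^e)) ^ (x ^ n) = (x : ZMod (2^e))) ↔
      e + 2 ≤ 2 * padicValNat 2 (x - 1) + 2 * padicValNat 2 (x + 1) + ℓ := by
  set K := x ^ n - 1 with hK
  have hxn1 : 1 ≤ x ^ n := Nat.one_le_pow _ _ (by omega)
  have hxn9 : 9 ≤ x ^ n := by
    calc (9:ℕ) = 3 ^ 2 := by norm_num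
    _ ≤ x ^ 2 := Nat.pow_le_pow_left hx3 2
    _ ≤ x ^ n := Nat.pow_le_pow_right (by omega) (by
        rcases hn with ⟨k, hk⟩; omega)
  have hKodd : Even K := by
    have : Odd (x ^ n) := hx.pow
    rcases this with ⟨k, hk⟩
    exact ⟨k, by omega⟩
  have hK0 : K ≠ 0 := by omega
  have hxK1 : 1 ≤ x ^ K := Nat.one_le_pow _ _ (by omega)
  have hxK3 : 3 ≤ x ^ K := le_trans hx3 (Nat.le_self_pow hK0 x)
  -- step 1,2,3: ZMod condition ↔ 2^e ∣ x^K - 1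
  have step1 : ((x : ZMod (2^e)) ^ (x ^ n) = (x : ZMod (2^e))) ↔ (2^e ∣ x ^ K - 1) := by
    rw [show ((x : ZMod (2^e)) ^ (x ^ n)) = ((x ^ (x ^ n) : ℕ) : ZMod (2^e)) by push_cast; ring,
      ZMod.natCast_eq_natCast_iff]
    have hsplit : x ^ (x ^ n) = x * x ^ K := by
      rw [← pow_succ']; congr 1; omega
    constructor
    · intro h
      rw [← Nat.modEq_iff_dvd' hxK1]
      have hcop : Nat.Coprime x (2^e) :=
        (Nat.coprime_two_right.mpr hx).pow_right e
      have h2 : x * 1 ≡ x * x ^ K [MOD 2^e] := by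
        rw [mul_one, ← hsplit]; exact h.symm
      exact (Nat.ModEq.cancel_left_of_coprime (by simpa using hcop.symm) h2)
    · intro h
      rw [← Nat.modEq_iff_dvd' hxK1] at h
      calc x ^ (x ^ n) = x * x ^ K := hsplit
      _ ≡ x * 1 [MOD 2^e] := (Nat.ModEq.mul_left x h.symm)
      _ = x := by ring
  rw [step1]
  -- step 4: divisibility ↔ valuation
  have h0 : x ^ K - 1 ≠ 0 := by omega
  rw [padicValNat_dvd_iff_le h0]
  -- step 5: LTE computation
  have h1 := lte2 hx3 hx hn (by omega)
  have h2 := lte2 hx3 hx hKodd hK0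
  rw [← hK] at h1
  omega

lemma ab_facts {x : ℕ} (hx : Odd x) (hx3 : 3 ≤ x) :
    1 ≤ padicValNat 2 (x-1) ∧ 1 ≤ padicValNat 2 (x+1) ∧
    (padicValNat 2 (x-1) = 1 ∨ padicValNat 2 (x+1) = 1) ∧
    3 ≤ padicValNat 2 (x-1) + padicValNat 2 (x+1) := by
  have hne1 : x - 1 ≠ 0 := by omega
  have hne2 : x + 1 ≠ 0 := by omega
  have hdvd1 : ∀ k : ℕ, 2^k ∣ x - 1 ↔ k ≤ padicValNat 2 (x-1) :=
    fun k => padicValNat_dvd_iff_le hne1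
  have hdvd2 : ∀ k : ℕ, 2^k ∣ x + 1 ↔ k ≤ padicValNat 2 (x+1) :=
    fun k => padicValNat_dvd_iff_le hne2
  have hodd : x % 2 = 1 := Nat.odd_iff.mp hx
  have ha1 : 1 ≤ padicValNat 2 (x-1) := by
    rw [← hdvd1 1, pow_one]; omega
  have hb1 : 1 ≤ padicValNat 2 (x+1) := by
    rw [← hdvd2 1, pow_one]; omega
  have hmin : padicValNat 2 (x-1) = 1 ∨ padicValNat 2 (x+1) = 1 := by
    by_contra h
    push_neg at h
    have h1 : (2:ℕ)^2 ∣ x - 1 := (hdvd1 2).mpr (by omega)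
    have h2 : (2:ℕ)^2 ∣ x + 1 := (hdvd2 2).mpr (by omega)
    norm_num at h1 h2
    omega
  have h3 : 3 ≤ padicValNat 2 (x-1) + padicValNat 2 (x+1) := by
    have h4 : x % 4 = 1 ∨ x % 4 = 3 := by omega
    rcases h4 with h4 | h4
    · have : (2:ℕ)^2 ∣ x - 1 := by norm_num; omega
      rw [hdvd1 2] at this; omega
    · have : (2:ℕ)^2 ∣ x + 1 := by norm_num; omega
      rw [hdvd2 2] at this; omega
  exact ⟨ha1, hb1, hmin, h3⟩

lemma cong_equiv {c x : ℕ} (hc : 3 ≤ c) (hx : Odd x) :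
    (x = 1 ∨ c + 1 ≤ padicValNat 2 (x-1) + padicValNat 2 (x+1)) ↔
      (x % 2^c = 1 ∨ x % 2^c = 2^c - 1) := by
  have h8 : 8 ≤ 2^c := by
    calc (8:ℕ) = 2^3 := by norm_num
    _ ≤ 2^c := Nat.pow_le_pow_right (by norm_num) hc
  have hodd : x % 2 = 1 := Nat.odd_iff.mp hx
  rcases eq_or_ne x 1 with rfl | hx1
  · simp only [true_or, true_iff]
    left; exact Nat.mod_eq_of_lt (by omega)
  have hx3 : 3 ≤ x := by omega
  obtain ⟨ha1, hb1, hmin, _⟩ := ab_facts hx hx3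
  have hne1 : x - 1 ≠ 0 := by omega
  have hne2 : x + 1 ≠ 0 := by omega
  have hdvd1 : ∀ k : ℕ, 2^k ∣ x - 1 ↔ k ≤ padicValNat 2 (x-1) :=
    fun k => padicValNat_dvd_iff_le hne1
  have hdvd2 : ∀ k : ℕ, 2^k ∣ x + 1 ↔ k ≤ padicValNat 2 (x+1) :=
    fun k => padicValNat_dvd_iff_le hne2
  constructor
  · rintro (rfl | hab)
    · omega
    rcases hmin with hm | hm
    · -- b = a+b - 1 ≥ c : 2^c ∣ x+1
      right
      have : (2:ℕ)^c ∣ x + 1 := (hdvd2 c).mpr (by omega)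
      obtain ⟨k, hk⟩ := this
      match k, hk with
      | 0, hk => omega
      | k+1, hk =>
        have hx' : x = 2^c * k + (2^c - 1) := by rw [Nat.mul_add] at hk; omega
        rw [hx', Nat.mul_add_mod]
        exact Nat.mod_eq_of_lt (by omega)
    · left
      have : (2:ℕ)^c ∣ x - 1 := (hdvd1 c).mpr (by omega)
      obtain ⟨k, hk⟩ := this
      have hx' : x = 2^c * k + 1 := by omega
      rw [hx', Nat.mul_add_mod]
      exact Nat.mod_eq_of_lt (by omega)
  · rintro (hm | hm)
    · right
      have hdm := Nat.div_add_mod x (2^c)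
      have : (2:ℕ)^c ∣ x - 1 := ⟨x / 2^c, by omega⟩
      rw [hdvd1 c] at this
      omega
    · right
      have hdm := Nat.div_add_mod x (2^c)
      have : (2:ℕ)^c ∣ x + 1 := ⟨x / 2^c + 1, by rw [Nat.mul_add]; omega⟩
      rw [hdvd2 c] at this
      omega
theorem stmt_11 (n e ℓ : ℕ) (hn : Even n) (hn1 : 0 < n) (hℓ : ℓ = padicValNat 2 n)
    (he : 1 ≤ e) :
    (e ≤ 4 + ℓ →
      ((Finset.Icc 1 (2 ^ e)).filter fun x : ℕ =>
          Odd x ∧ (x : ZMod (2 ^ e)) ^ (x ^ n) = (x : ZMod (2 ^ e))).card = 2 ^ (e - 1)) ∧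
    (5 + ℓ ≤ e →
      ((Finset.Icc 1 (2 ^ e)).filter fun x : ℕ =>
          Odd x ∧ (x : ZMod (2 ^ e)) ^ (x ^ n) = (x : ZMod (2 ^ e))).card =
        2 ^ ((e + ℓ) / 2 + 1)) := by
  constructor
  · intro hle
    have hset : ((Finset.Icc 1 (2 ^ e)).filter fun x : ℕ =>
          Odd x ∧ (x : ZMod (2 ^ e)) ^ (x ^ n) = (x : ZMod (2 ^ e)))
        = (Finset.Icc 1 (2^e)).filter (fun x => x % 2^1 = 1) := by
      apply Finset.filter_congr
      intro x hxm
      simp only [Finset.mem_Icc] at hxm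
      simp only [pow_one]
      constructor
      · rintro ⟨ho, _⟩; exact Nat.odd_iff.mp ho
      · intro hmod
        have ho : Odd x := Nat.odd_iff.mpr hmod
        refine ⟨ho, ?_⟩
        rcases eq_or_ne x 1 with rfl | hx1
        · simp
        · have hx3 : 3 ≤ x := by omega
          obtain ⟨ha, hb, _, hab⟩ := ab_facts ho hx3
          exact (main_equiv ho hx3 hn hn1 hℓ).mpr (by omega)
    rw [hset, count_res e 1 1 he le_rfl (by norm_num)]
  · intro hge
    set c := (e - ℓ + 1)/2 with hcdef
    have hc3 : 3 ≤ c := by omega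
    have hce : c ≤ e := by omega
    have h8 : 8 ≤ 2^c := by
      calc (8:ℕ) = 2^3 := by norm_num
      _ ≤ 2^c := Nat.pow_le_pow_right (by norm_num) hc3
    have hset : ((Finset.Icc 1 (2 ^ e)).filter fun x : ℕ =>
          Odd x ∧ (x : ZMod (2 ^ e)) ^ (x ^ n) = (x : ZMod (2 ^ e)))
        = (Finset.Icc 1 (2^e)).filter (fun x => x % 2^c = 1 ∨ x % 2^c = 2^c - 1) := by
      apply Finset.filter_congr
      intro x hxm
      simp only [Finset.mem_Icc] at hxm
      constructor
      · rintro ⟨ho, hcond⟩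
        apply (cong_equiv hc3 ho).mp
        rcases eq_or_ne x 1 with rfl | hx1
        · exact Or.inl rfl
        · have hx3 : 3 ≤ x := by
            have := Nat.odd_iff.mp ho; omega
          have := (main_equiv ho hx3 hn hn1 hℓ).mp hcond
          right; omega
      · intro hmod
        have ho : Odd x := by
          have hmm : x % 2^c % 2 = x % 2 :=
            Nat.mod_mod_of_dvd x (dvd_pow_self 2 (by omega))
          obtain ⟨t, ht⟩ : (2:ℕ) ∣ 2^c := dvd_pow_self 2 (by omega)
          rw [Nat.odd_iff]
          rcases hmod with h | h <;> omega
        refine ⟨ho, ?_⟩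
        have hlhs := (cong_equiv hc3 ho).mpr hmod
        rcases hlhs with rfl | hab
        · simp
        · have hx3 : 3 ≤ x := by
            rcases eq_or_ne x 1 with rfl | h1
            · have h0 : padicValNat 2 (1-1) = 0 := by norm_num
              have h2 : padicValNat 2 (1+1) = 1 := by
                norm_num [padicValNat.self]
              omega
            · have := Nat.odd_iff.mp ho; omega
          exact (main_equiv ho hx3 hn hn1 hℓ).mpr (by omega)
    rw [hset, Finset.filter_or,
      Finset.card_union_of_disjoint (Finset.disjoint_filter.mpr (fun x _ h1 h2 => by omega)),
      count_res e c 1 hce le_rfl (by omega),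
      count_res e c (2^c - 1) hce (by omega) (by omega)]
    have : 2^(e-c) + 2^(e-c) = 2^(e-c+1) := by ring
    rw [this]
    congr 1
    omega
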